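/- Let φ : (0,∞) → (0,∞) be continuous with l ≤ φ(t)t²/Φ(t) ≤ m for all t > 0 (1 < l ≤ m < N), where Φ(t) = ∫₀^{|t|}φ(s)s ds. Define ξ₀(t) = min{t^l, t^m} and ξ₁(t) = max{t^l, t^m}. Then for all ρ ≥ 0 and t ≥ 0: ξ₀(ρ)Φ(t) ≤ Φ(ρt) ≤ ξ₁(ρ)Φ(t). -/

import Mathlib

open Real MeasureTheory

private lemma stmt14_mono (Φ φ : ℝ → ℝ) (e : ℝ)
    (hd : ∀ x ∈ Set.Ioi (0:ℝ), HasDerivAt Φ (φ x * x) x)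
    (hcmp : ∀ x ∈ Set.Ioi (0:ℝ), e * Φ x ≤ φ x * x ^ 2) :
    MonotoneOn (fun x => Φ x * x ^ (-e)) (Set.Ioi (0:ℝ)) := by
  have hderiv : ∀ x ∈ Set.Ioi (0:ℝ), HasDerivAt (fun x => Φ x * x ^ (-e))
      (φ x * x * x ^ (-e) + Φ x * (-e * x ^ (-e - 1))) x := by
    intro x hx
    exact (hd x hx).mul (Real.hasDerivAt_rpow_const (Or.inl (ne_of_gt hx)))
  apply monotoneOn_of_deriv_nonneg (convex_Ioi 0)
  · intro x hx; exact ((hderiv x hx).continuousAt).continuousWithinAt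
  · rw [interior_Ioi]; intro x hx
    exact ((hderiv x hx).differentiableAt).differentiableWithinAt
  · rw [interior_Ioi]; intro x hx
    rw [(hderiv x hx).deriv]
    have hx0 : (0:ℝ) < x := hx
    have h1 : x ^ (-e) = x ^ (-e - 1) * x := by
      rw [← Real.rpow_add_one (ne_of_gt hx0)]; ring_nf
    have h2 : (0:ℝ) < x ^ (-e - 1) := Real.rpow_pos_of_pos hx0 _
    have h3 := hcmp x hx
    have heq : φ x * x * x ^ (-e) + Φ x * (-e * x ^ (-e - 1))
        = x ^ (-e - 1) * (φ x * x ^ 2 - e * Φ x) := by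
      rw [h1]; ring
    rw [heq]
    exact mul_nonneg h2.le (by linarith)

private lemma stmt14_anti (Φ φ : ℝ → ℝ) (e : ℝ)
    (hd : ∀ x ∈ Set.Ioi (0:ℝ), HasDerivAt Φ (φ x * x) x)
    (hcmp : ∀ x ∈ Set.Ioi (0:ℝ), φ x * x ^ 2 ≤ e * Φ x) :
    AntitoneOn (fun x => Φ x * x ^ (-e)) (Set.Ioi (0:ℝ)) := by
  have hderiv : ∀ x ∈ Set.Ioi (0:ℝ), HasDerivAt (fun x => Φ x * x ^ (-e))
      (φ x * x * x ^ (-e) + Φ x * (-e * x ^ (-e - 1))) x := by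
    intro x hx
    exact (hd x hx).mul (Real.hasDerivAt_rpow_const (Or.inl (ne_of_gt hx)))
  apply antitoneOn_of_deriv_nonpos (convex_Ioi 0)
  · intro x hx; exact ((hderiv x hx).continuousAt).continuousWithinAt
  · rw [interior_Ioi]; intro x hx
    exact ((hderiv x hx).differentiableAt).differentiableWithinAt
  · rw [interior_Ioi]; intro x hx
    rw [(hderiv x hx).deriv]
    have hx0 : (0:ℝ) < x := hx
    have h1 : x ^ (-e) = x ^ (-e - 1) * x := by
      rw [← Real.rpow_add_one (ne_of_gt hx0)]; ring_nf
    have h2 : (0:ℝ) < x ^ (-e - 1) := Real.rpow_pos_of_pos hx0 _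
    have h3 := hcmp x hx
    have heq : φ x * x * x ^ (-e) + Φ x * (-e * x ^ (-e - 1))
        = x ^ (-e - 1) * (φ x * x ^ 2 - e * Φ x) := by
      rw [h1]; ring
    rw [heq]
    exact mul_nonpos_of_nonneg_of_nonpos h2.le (by linarith)

theorem stmt_14 (φ Φ : ℝ → ℝ) (l m N : ℝ)
    (hφcont : ContinuousOn φ (Set.Ioi 0))
    (hφpos : ∀ t > (0:ℝ), 0 < φ t)
    (hΦ : ∀ t : ℝ, Φ t = ∫ s in (0:ℝ)..|t|, φ s * s)
    (hl : 1 < l) (hlm : l ≤ m) (hmN : m < N)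
    (hbound : ∀ t > (0:ℝ), l ≤ φ t * t ^ 2 / Φ t ∧ φ t * t ^ 2 / Φ t ≤ m) :
    ∀ ρ : ℝ, 0 ≤ ρ → ∀ t : ℝ, 0 ≤ t →
      min (ρ ^ l) (ρ ^ m) * Φ t ≤ Φ (ρ * t) ∧
      Φ (ρ * t) ≤ max (ρ ^ l) (ρ ^ m) * Φ t := by
  have hΦ0 : Φ 0 = 0 := by
    rw [hΦ 0, abs_zero, intervalIntegral.integral_same]
  -- positivity of Φ on (0, ∞)
  have hΦpos : ∀ x > (0:ℝ), 0 < Φ x := by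
    intro x hx
    obtain ⟨h1, _⟩ := hbound x hx
    have hnum : 0 < φ x * x ^ 2 := by
      have := hφpos x hx
      positivity
    rcases lt_trichotomy (Φ x) 0 with h | h | h
    · exfalso
      have : φ x * x ^ 2 / Φ x < 0 := div_neg_of_pos_of_neg hnum h
      linarith
    · exfalso; rw [h, div_zero] at h1; linarith
    · exact h
  -- integrability
  have hInt : ∀ x > (0:ℝ), IntervalIntegrable (fun s => φ s * s) volume 0 x := by
    intro x hx
    by_contra hni
    have : Φ x = 0 := by
      rw [hΦ x, abs_of_pos hx, intervalIntegral.integral_undef hni]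
    exact absurd this (ne_of_gt (hΦpos x hx))
  -- derivative of Φ on (0, ∞)
  have hd : ∀ x ∈ Set.Ioi (0:ℝ), HasDerivAt Φ (φ x * x) x := by
    intro x hx
    have hx0 : (0:ℝ) < x := hx
    have hcontf : ContinuousOn (fun s => φ s * s) (Set.Ioi (0:ℝ)) :=
      hφcont.mul continuousOn_id
    have hca : ContinuousAt (fun s => φ s * s) x :=
      hcontf.continuousAt (Ioi_mem_nhds hx0)
    have hF : HasDerivAt (fun u => ∫ s in (0:ℝ)..u, φ s * s) (φ x * x) x :=
      intervalIntegral.integral_hasDerivAt_right (hInt x hx0)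
        (hcontf.stronglyMeasurableAtFilter isOpen_Ioi x hx) hca
    refine hF.congr_of_eventuallyEq ?_
    filter_upwards [Ioi_mem_nhds hx0] with y hy
    rw [hΦ y, abs_of_pos (show (0:ℝ) < y from hy)]
  -- comparison inequalities
  have hlo : ∀ x ∈ Set.Ioi (0:ℝ), l * Φ x ≤ φ x * x ^ 2 := by
    intro x hx
    have := (hbound x hx).1
    have hp := hΦpos x hx
    rw [le_div_iff₀ hp] at this; linarith
  have hhi : ∀ x ∈ Set.Ioi (0:ℝ), φ x * x ^ 2 ≤ m * Φ x := by
    intro x hx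
    have := (hbound x hx).2
    have hp := hΦpos x hx
    rw [div_le_iff₀ hp] at this; linarith
  have hmono := stmt14_mono Φ φ l hd hlo
  have hanti := stmt14_anti Φ φ m hd hhi
  -- restate as ratio inequalities
  have key : ∀ a b : ℝ, 0 < a → a ≤ b →
      Φ a * b ^ l ≤ Φ b * a ^ l ∧ Φ b * a ^ m ≤ Φ a * b ^ m := by
    intro a b ha hab
    have hb : (0:ℝ) < b := lt_of_lt_of_le ha hab
    have h1 := hmono (Set.mem_Ioi.mpr ha) (Set.mem_Ioi.mpr hb) hab
    have h2 := hanti (Set.mem_Ioi.mpr ha) (Set.mem_Ioi.mpr hb) hab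
    simp only at h1 h2
    constructor
    · have := mul_le_mul_of_nonneg_right h1
        (le_of_lt (mul_pos (Real.rpow_pos_of_pos ha l) (Real.rpow_pos_of_pos hb l)))
      calc Φ a * b ^ l = Φ a * a ^ (-l) * (a ^ l * b ^ l) := by
            rw [Real.rpow_neg ha.le]
            field_simp
        _ ≤ Φ b * b ^ (-l) * (a ^ l * b ^ l) := this
        _ = Φ b * a ^ l := by
            rw [Real.rpow_neg hb.le]
            field_simp
    · have := mul_le_mul_of_nonneg_right h2
        (le_of_lt (mul_pos (Real.rpow_pos_of_pos ha m) (Real.rpow_pos_of_pos hb m)))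
      calc Φ b * a ^ m = Φ b * b ^ (-m) * (a ^ m * b ^ m) := by
            rw [Real.rpow_neg hb.le]
            field_simp
        _ ≤ Φ a * a ^ (-m) * (a ^ m * b ^ m) := this
        _ = Φ a * b ^ m := by
            rw [Real.rpow_neg ha.le]
            field_simp
  intro ρ hρ t ht
  rcases eq_or_lt_of_le ht with ht0 | ht0
  · rw [← ht0, mul_zero, hΦ0]
    simp
  rcases eq_or_lt_of_le hρ with hρ0 | hρ0
  · rw [← hρ0, zero_mul, hΦ0]
    have hl0 : l ≠ 0 := by linarith
    have hm0 : m ≠ 0 := by linarith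
    rw [Real.zero_rpow hl0, Real.zero_rpow hm0]
    simp
  have hΦt := hΦpos t ht0
  have hρt : 0 < ρ * t := mul_pos hρ0 ht0
  have hmulrl : (ρ * t) ^ l = ρ ^ l * t ^ l := Real.mul_rpow hρ0.le ht0.le
  have hmulrm : (ρ * t) ^ m = ρ ^ m * t ^ m := Real.mul_rpow hρ0.le ht0.le
  have htl : (0:ℝ) < t ^ l := Real.rpow_pos_of_pos ht0 l
  have htm : (0:ℝ) < t ^ m := Real.rpow_pos_of_pos ht0 m
  rcases le_total 1 ρ with hρ1 | hρ1
  · -- ρ ≥ 1 : min = ρ^l, max = ρ^m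
    have hlem : ρ ^ l ≤ ρ ^ m := Real.rpow_le_rpow_of_exponent_le hρ1 hlm
    rw [min_eq_left hlem, max_eq_right hlem]
    have hle : t ≤ ρ * t := le_mul_of_one_le_left ht0.le hρ1
    obtain ⟨k1, k2⟩ := key t (ρ * t) ht0 hle
    rw [hmulrl] at k1
    rw [hmulrm] at k2
    constructor
    · have : Φ t * (ρ ^ l * t ^ l) ≤ Φ (ρ * t) * t ^ l := k1
      have := (mul_le_mul_iff_of_pos_right htl).mp (by linarith [this] : Φ t * ρ ^ l * t ^ l ≤ Φ (ρ * t) * t ^ l)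
      linarith [this]
    · have : Φ (ρ * t) * t ^ m ≤ Φ t * (ρ ^ m * t ^ m) := k2
      have := (mul_le_mul_iff_of_pos_right htm).mp (by linarith [this] : Φ (ρ * t) * t ^ m ≤ Φ t * ρ ^ m * t ^ m)
      linarith [this]
  · -- ρ ≤ 1 : min = ρ^m, max = ρ^l
    have hlem : ρ ^ m ≤ ρ ^ l := Real.rpow_le_rpow_of_exponent_ge hρ0 hρ1 hlm
    rw [min_eq_right hlem, max_eq_left hlem]
    have hle : ρ * t ≤ t := mul_le_of_le_one_left ht0.le hρ1
    obtain ⟨k1, k2⟩ := key (ρ * t) t hρt hle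
    rw [hmulrl] at k1
    rw [hmulrm] at k2
    constructor
    · have : Φ t * (ρ ^ m * t ^ m) ≤ Φ (ρ * t) * t ^ m := k2
      have := (mul_le_mul_iff_of_pos_right htm).mp (by linarith [this] : Φ t * ρ ^ m * t ^ m ≤ Φ (ρ * t) * t ^ m)
      linarith [this]
    · have : Φ (ρ * t) * t ^ l ≤ Φ t * (ρ ^ l * t ^ l) := k1
      have := (mul_le_mul_iff_of_pos_right htl).mp (by linarith [this] : Φ (ρ * t) * t ^ l ≤ Φ t * ρ ^ l * t ^ l)
      linarith [this]
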